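/- Let $u, w \in S_n$ with $u \le_k w$ in the $k$-Bruhat order. Then there exists $z \in S_k \times S_{n-k}$ such that $uz$ is anti-Grassmannian (decreasing on $\{1,\dots,k\}$ and on $\{k+1,\dots,n\}$), $uz \le_k wz$, and both factorizations $uz$ and $wz$ are length additive, i.e. $\ell(uz) = \ell(u)+\ell(z)$ and $\ell(wz) = \ell(w)+\ell(z)$. -/

import Mathlib

/-- Coxeter length of a permutation of `Fin n`: the number of inversions. -/
def len {n : ℕ} (u : Equiv.Perm (Fin n)) : ℕ :=
  (Finset.univ.filter fun p : Fin n × Fin n => p.1 < p.2 ∧ u p.2 < u p.1).card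

/-- `w` covers `u` in the strong Bruhat order: `w = u·t` for a transposition `t`
and `ℓ(w) = ℓ(u) + 1`. -/
def BruhatCover {n : ℕ} (u w : Equiv.Perm (Fin n)) : Prop :=
  (∃ i j : Fin n, i ≠ j ∧ w = u * Equiv.swap i j) ∧ len w = len u + 1

/-- The strong Bruhat order on `S_n`. -/
def BruhatLE {n : ℕ} (u w : Equiv.Perm (Fin n)) : Prop :=
  Relation.ReflTransGen BruhatCover u w

/-- The image `u({1,…,k})`, zero-indexed as `u({i : i.val < k})`. -/
def kImage {n : ℕ} (k : ℕ) (u : Equiv.Perm (Fin n)) : Finset (Fin n) :=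
  (Finset.univ.filter fun i : Fin n => i.val < k).image u

/-- `w` is a `k`-cover of `u`: a Bruhat cover with `w({1,…,k}) ≠ u({1,…,k})`. -/
def KBruhatCover {n : ℕ} (k : ℕ) (u w : Equiv.Perm (Fin n)) : Prop :=
  BruhatCover u w ∧ kImage k u ≠ kImage k w

/-- The `k`-Bruhat order on `S_n`: transitive closure of `k`-covers. -/
def KBruhatLE {n : ℕ} (k : ℕ) (u w : Equiv.Perm (Fin n)) : Prop :=
  Relation.ReflTransGen (KBruhatCover k) u w

/-- `z` lies in the Young subgroup `S_k × S_{n-k}`, i.e. `z` fixes the sets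
`{1,…,k}` and `{k+1,…,n}` setwise. -/
def IsYoung {n : ℕ} (k : ℕ) (z : Equiv.Perm (Fin n)) : Prop :=
  ∀ i : Fin n, (z i).val < k ↔ i.val < k

/-- `u` is anti-Grassmannian of type `(k,n)`: decreasing on `{1,…,k}` and on
`{k+1,…,n}` (zero-indexed: on `val < k` and on `k ≤ val`). -/
def AntiGrass {n : ℕ} (k : ℕ) (u : Equiv.Perm (Fin n)) : Prop :=
  (∀ a b : Fin n, a < b → b.val < k → u b < u a) ∧
  (∀ a b : Fin n, a < b → k ≤ a.val → u b < u a)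

open Finset Equiv

theorem len_lt_mul_swap {n : ℕ} (u : Equiv.Perm (Fin n)) {p q : Fin n} (hpq : p < q)
    (hu : u p < u q) : len u < len (u * Equiv.swap p q) := by
  classical
  set t : Equiv.Perm (Fin n) := Equiv.swap p q with ht
  set w : Equiv.Perm (Fin n) := u * t with hw
  have hwt : ∀ x, w x = u (t x) := fun x => rfl
  have htt : ∀ x, t (t x) = x := fun x => Equiv.swap_apply_self p q x
  set A1 : Finset (Fin n × Fin n) :=
    univ.filter (fun e => (e.1 < e.2 ∧ u e.2 < u e.1) ∧ t e.1 < t e.2) with hA1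
  set A2 : Finset (Fin n × Fin n) :=
    univ.filter (fun e => (e.1 < e.2 ∧ u e.2 < u e.1) ∧ t e.2 < t e.1) with hA2
  set B1 : Finset (Fin n × Fin n) :=
    univ.filter (fun e => (e.1 < e.2 ∧ w e.2 < w e.1) ∧ t e.1 < t e.2) with hB1
  set B2 : Finset (Fin n × Fin n) :=
    univ.filter (fun e => (e.1 < e.2 ∧ w e.2 < w e.1) ∧ t e.2 < t e.1) with hB2
  set B2n : Finset (Fin n × Fin n) :=
    univ.filter (fun e => (e.1 < e.2 ∧ ¬ (w e.2 < w e.1)) ∧ t e.2 < t e.1) with hB2n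
  set G : Finset (Fin n × Fin n) :=
    univ.filter (fun e => e.1 < e.2 ∧ t e.2 < t e.1) with hG
  -- generic split
  have hsplit : ∀ (v : Equiv.Perm (Fin n)), len v =
      (univ.filter (fun e : Fin n × Fin n => (e.1 < e.2 ∧ v e.2 < v e.1) ∧ t e.1 < t e.2)).card +
      (univ.filter (fun e : Fin n × Fin n => (e.1 < e.2 ∧ v e.2 < v e.1) ∧ t e.2 < t e.1)).card := by
    intro v
    have hkey := Finset.card_filter_add_card_filter_not
      (s := univ.filter (fun e : Fin n × Fin n => e.1 < e.2 ∧ v e.2 < v e.1))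
      (p := fun e => t e.1 < t e.2)
    rw [Finset.filter_filter, Finset.filter_filter] at hkey
    have h2 : (univ.filter fun a : Fin n × Fin n => (a.1 < a.2 ∧ v a.2 < v a.1) ∧ ¬ t a.1 < t a.2)
        = univ.filter fun e : Fin n × Fin n => (e.1 < e.2 ∧ v e.2 < v e.1) ∧ t e.2 < t e.1 := by
      apply Finset.filter_congr; intro e _
      constructor
      · rintro ⟨⟨h12, hv⟩, hnt⟩
        refine ⟨⟨h12, hv⟩, ?_⟩
        rcases lt_or_gt_of_ne (fun hc : t e.1 = t e.2 => (ne_of_lt h12) (t.injective hc)) with h | h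
        · exact absurd h hnt
        · exact h
      · rintro ⟨hP, hnt⟩
        exact ⟨hP, fun hc => absurd hnt (asymm hc)⟩
    rw [h2] at hkey
    rw [len, ← hkey]
  have hlenu : len u = A1.card + A2.card := hsplit u
  have hlenw : len w = B1.card + B2.card := hsplit w
  -- A1 ≃ B1
  have hA1B1 : A1.card = B1.card := by
    apply Finset.card_bij' (fun e _ => (t e.1, t e.2)) (fun e _ => (t e.1, t e.2))
    · intro e he
      simp only [hA1, Finset.mem_filter, Finset.mem_univ, true_and] at he
      simp only [hB1, Finset.mem_filter, Finset.mem_univ, true_and]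
      obtain ⟨⟨h12, hv⟩, hto⟩ := he
      exact ⟨⟨hto, by simp only [hwt, htt]; exact hv⟩, by simp only [htt]; exact h12⟩
    · intro e he
      simp only [hB1, Finset.mem_filter, Finset.mem_univ, true_and] at he
      simp only [hA1, Finset.mem_filter, Finset.mem_univ, true_and]
      obtain ⟨⟨h12, hv⟩, hto⟩ := he
      simp only [hwt] at hv
      exact ⟨⟨hto, hv⟩, by simp only [htt]; exact h12⟩
    · intro e _; simp [htt]
    · intro e _; simp [htt]
  -- A2 ≃ B2n
  have hA2B2n : A2.card = B2n.card := by
    apply Finset.card_bij' (fun e _ => (t e.2, t e.1)) (fun e _ => (t e.2, t e.1))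
    · intro e he
      simp only [hA2, Finset.mem_filter, Finset.mem_univ, true_and] at he
      simp only [hB2n, Finset.mem_filter, Finset.mem_univ, true_and]
      obtain ⟨⟨h12, hv⟩, hto⟩ := he
      refine ⟨⟨hto, ?_⟩, by simp only [htt]; exact h12⟩
      simp only [hwt, htt]
      exact fun hc => absurd hv (asymm hc)
    · intro e he
      simp only [hB2n, Finset.mem_filter, Finset.mem_univ, true_and] at he
      simp only [hA2, Finset.mem_filter, Finset.mem_univ, true_and]
      obtain ⟨⟨h12, hv⟩, hto⟩ := he
      simp only [hwt] at hv
      refine ⟨⟨hto, ?_⟩, by simp only [htt]; exact h12⟩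
      rcases lt_or_gt_of_ne (fun hc : u (t e.1) = u (t e.2) =>
        (ne_of_lt h12) (t.injective (u.injective hc))) with h | h
      · exact h
      · exact absurd h hv
    · intro e _; simp [htt]
    · intro e _; simp [htt]
  -- G split
  have hGsplit : G.card = B2.card + B2n.card := by
    have hkey := Finset.card_filter_add_card_filter_not
      (s := G) (p := fun e => w e.2 < w e.1)
    rw [hG, Finset.filter_filter, Finset.filter_filter] at hkey
    have e1 : (univ.filter fun a : Fin n × Fin n => (a.1 < a.2 ∧ t a.2 < t a.1) ∧ w a.2 < w a.1)
        = B2 := by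
      rw [hB2]; apply Finset.filter_congr; intro e _; tauto
    have e2 : (univ.filter fun a : Fin n × Fin n => (a.1 < a.2 ∧ t a.2 < t a.1) ∧ ¬ w a.2 < w a.1)
        = B2n := by
      rw [hB2n]; apply Finset.filter_congr; intro e _; tauto
    rw [e1, e2] at hkey
    rw [hG, ← hkey]
  -- structure of A2 elements
  have hA2mem : ∀ e : Fin n × Fin n, e ∈ A2 →
      (e.1 = p ∧ p < e.2 ∧ e.2 < q ∧ u e.2 < u p) ∨
      (e.2 = q ∧ p < e.1 ∧ e.1 < q ∧ u q < u e.1) := by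
    intro e he
    simp only [hA2, Finset.mem_filter, Finset.mem_univ, true_and] at he
    obtain ⟨⟨h12, huv⟩, hrev⟩ := he
    rw [ht] at hrev
    by_cases h1p : e.1 = p
    · by_cases h2q : e.2 = q
      · exact absurd hu (asymm (by rw [← h1p, ← h2q]; exact huv))
      · have h2p : e.2 ≠ p := ne_of_gt (by rw [← h1p]; exact h12)
        rw [Equiv.swap_apply_of_ne_of_ne h2p h2q, h1p, Equiv.swap_apply_left] at hrev
        exact Or.inl ⟨h1p, by rw [← h1p]; exact h12, hrev, by rw [← h1p]; exact huv⟩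
    · by_cases h1q : e.1 = q
      · exfalso
        have hq2 : q < e.2 := by rw [← h1q]; exact h12
        have h2p : e.2 ≠ p := ne_of_gt (hpq.trans hq2)
        have h2q : e.2 ≠ q := ne_of_gt hq2
        rw [Equiv.swap_apply_of_ne_of_ne h2p h2q, h1q, Equiv.swap_apply_right] at hrev
        exact absurd (hpq.trans hq2) (asymm hrev)
      · have ht1 : Equiv.swap p q e.1 = e.1 := Equiv.swap_apply_of_ne_of_ne h1p h1q
        by_cases h2q : e.2 = q
        · rw [ht1, h2q, Equiv.swap_apply_right] at hrev
          exact Or.inr ⟨h2q, hrev, by rw [← h2q]; exact h12, by rw [← h2q]; exact huv⟩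
        · by_cases h2p : e.2 = p
          · exfalso
            have hlt : e.1 < p := by rw [← h2p]; exact h12
            rw [ht1, h2p, Equiv.swap_apply_left] at hrev
            exact absurd (hlt.trans hpq) (asymm hrev)
          · exfalso
            rw [ht1, Equiv.swap_apply_of_ne_of_ne h2p h2q] at hrev
            exact absurd h12 (asymm hrev)
  have hpqG : (p, q) ∈ G := by
    simp only [hG, Finset.mem_filter, Finset.mem_univ, true_and]
    exact ⟨hpq, by simp [ht, Equiv.swap_apply_left, Equiv.swap_apply_right, hpq]⟩
  have hpqA2 : (p, q) ∉ A2 := by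
    simp only [hA2, Finset.mem_filter, Finset.mem_univ, true_and]
    rintro ⟨⟨-, hv⟩, -⟩
    exact absurd hu (asymm hv)
  have hA2G : A2 ⊆ G := by
    intro e he
    simp only [hA2, Finset.mem_filter, Finset.mem_univ, true_and] at he
    simp only [hG, Finset.mem_filter, Finset.mem_univ, true_and]
    exact ⟨he.1.1, he.2⟩
  -- the injection
  have hinj : (insert (p, q) A2).card ≤ (G \ A2).card := by
    apply Finset.card_le_card_of_injOn
      (fun e => if e.2 = q then (if e.1 = p then e else (p, e.1)) else (e.2, q))
    · intro e he
      rcases Finset.mem_insert.mp he with he | he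
      · subst he
        simp only [if_pos rfl]
        exact Finset.mem_sdiff.mpr ⟨hpqG, hpqA2⟩
      · rcases hA2mem e he with ⟨h1, h2, h3, h4⟩ | ⟨h1, h2, h3, h4⟩
        · have h2q : e.2 ≠ q := ne_of_lt h3
          simp only [if_neg h2q]
          refine Finset.mem_sdiff.mpr ⟨?_, ?_⟩
          · simp only [hG, Finset.mem_filter, Finset.mem_univ, true_and]
            refine ⟨h3, ?_⟩
            show t q < t e.2
            rw [ht, Equiv.swap_apply_right,
              Equiv.swap_apply_of_ne_of_ne (ne_of_gt h2) h2q]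
            exact h2
          · simp only [hA2, Finset.mem_filter, Finset.mem_univ, true_and]
            rintro ⟨⟨-, hv⟩, -⟩
            exact absurd (h4.trans hu) (asymm hv)
        · have h1p : e.1 ≠ p := ne_of_gt h2
          simp only [if_pos h1, if_neg h1p]
          refine Finset.mem_sdiff.mpr ⟨?_, ?_⟩
          · simp only [hG, Finset.mem_filter, Finset.mem_univ, true_and]
            refine ⟨h2, ?_⟩
            show t e.1 < t p
            rw [ht, Equiv.swap_apply_left,
              Equiv.swap_apply_of_ne_of_ne h1p (ne_of_lt h3)]
            exact h3
          · simp only [hA2, Finset.mem_filter, Finset.mem_univ, true_and]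
            rintro ⟨⟨-, hv⟩, -⟩
            exact absurd (hu.trans h4) (asymm hv)
    · intro e1 he1 e2 he2 heq
      replace he1 := Finset.mem_coe.mp he1
      replace he2 := Finset.mem_coe.mp he2
      simp only at heq
      have img : ∀ e ∈ insert (p, q) A2,
          (e = (p,q) ∧ (if e.2 = q then (if e.1 = p then e else (p, e.1)) else (e.2, q)) = (p,q)) ∨
          (e.1 = p ∧ p < e.2 ∧ e.2 < q ∧
            (if e.2 = q then (if e.1 = p then e else (p, e.1)) else (e.2, q)) = (e.2, q)) ∨
          (e.2 = q ∧ p < e.1 ∧ e.1 < q ∧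
            (if e.2 = q then (if e.1 = p then e else (p, e.1)) else (e.2, q)) = (p, e.1)) := by
        intro e he
        rcases Finset.mem_insert.mp he with h | h
        · left; subst h; simp
        · rcases hA2mem e h with ⟨a, b, c, -⟩ | ⟨a, b, c, -⟩
          · exact Or.inr (Or.inl ⟨a, b, c, by rw [if_neg (ne_of_lt c)]⟩)
          · exact Or.inr (Or.inr ⟨a, b, c, by rw [if_pos a, if_neg (ne_of_gt b)]⟩)
      rcases img e1 he1 with ⟨he, hi⟩ | ⟨a1, b1, c1, hi⟩ | ⟨a1, b1, c1, hi⟩ <;>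
        rcases img e2 he2 with ⟨he', hi'⟩ | ⟨a2, b2, c2, hi'⟩ | ⟨a2, b2, c2, hi'⟩ <;>
        rw [hi, hi'] at heq <;>
        simp only [Prod.mk.injEq] at heq
      · exact he.trans he'.symm
      · exact absurd heq.1 (ne_of_lt b2)
      · exact absurd heq.2.symm (ne_of_lt c2)
      · exact absurd heq.1 (ne_of_gt b1)
      · exact Prod.ext (a1.trans a2.symm) heq.1
      · exact absurd heq.1 (ne_of_gt b1)
      · exact absurd heq.2 (ne_of_lt c1)
      · exact absurd heq.2 (ne_of_lt c1)
      · exact Prod.ext heq.2 (a1.trans a2.symm)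
  have hins : (insert (p, q) A2).card = A2.card + 1 := Finset.card_insert_of_notMem hpqA2
  have hsd : (G \ A2).card = G.card - A2.card := Finset.card_sdiff_of_subset hA2G
  have hle : A2.card ≤ G.card := Finset.card_le_card hA2G
  omega

theorem len_add_three_le {n : ℕ} (u : Equiv.Perm (Fin n)) {p x q : Fin n}
    (hpx : p < x) (hxq : x < q) (h1 : u p < u x) (h2 : u x < u q) :
    len u + 3 ≤ len (u * Equiv.swap p q) := by
  have hid : Equiv.swap p q = Equiv.swap p x * Equiv.swap x q * Equiv.swap p x := by
    rw [← Equiv.swap_mul_swap_mul_swap (ne_of_gt hxq) (ne_of_gt (hpx.trans hxq)),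
      Equiv.swap_comm x p, Equiv.swap_comm q x]
  set u1 := u * Equiv.swap p x with hu1
  have s1 : len u < len u1 := len_lt_mul_swap u hpx h1
  have hu1p : u1 p = u x := by rw [hu1]; simp [Equiv.Perm.mul_apply]
  have hu1x : u1 x = u p := by rw [hu1]; simp [Equiv.Perm.mul_apply]
  have hu1q : u1 q = u q := by
    rw [hu1]; simp only [Equiv.Perm.mul_apply]
    rw [Equiv.swap_apply_of_ne_of_ne (ne_of_gt (hpx.trans hxq)) (ne_of_gt hxq)]
  set u2 := u1 * Equiv.swap x q with hu2
  have s2 : len u1 < len u2 := by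
    apply len_lt_mul_swap u1 hxq
    rw [hu1x, hu1q]; exact h1.trans h2
  have hu2p : u2 p = u x := by
    rw [hu2]; simp only [Equiv.Perm.mul_apply]
    rw [Equiv.swap_apply_of_ne_of_ne (ne_of_lt hpx) (ne_of_lt (hpx.trans hxq))]
    exact hu1p
  have hu2x : u2 x = u q := by
    rw [hu2]; simp only [Equiv.Perm.mul_apply, Equiv.swap_apply_left]
    exact hu1q
  have s3 : len u2 < len (u2 * Equiv.swap p x) := by
    apply len_lt_mul_swap u2 hpx
    rw [hu2p, hu2x]; exact h2
  have hfin : u * Equiv.swap p q = u2 * Equiv.swap p x := by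
    rw [hu2, hu1, hid]; group
  rw [hfin]; omega

theorem cover_structure {n : ℕ} {u w : Equiv.Perm (Fin n)} {p q : Fin n} (hpq : p < q)
    (hw : w = u * Equiv.swap p q) (hlen : len w = len u + 1) :
    u p < u q ∧ ∀ x : Fin n, p < x → x < q → ¬(u p < u x ∧ u x < u q) := by
  have hupq : u p ≠ u q := fun hc => (ne_of_lt hpq) (u.injective hc)
  have huplt : u p < u q := by
    rcases lt_or_gt_of_ne hupq with h | h
    · exact h
    · exfalso
      have hwp : w p < w q := by
        rw [hw]; simp only [Equiv.Perm.mul_apply, Equiv.swap_apply_left,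
          Equiv.swap_apply_right]
        exact h
      have h2 := len_lt_mul_swap w hpq hwp
      rw [hw, mul_assoc, Equiv.swap_mul_self, mul_one] at h2
      rw [hw] at hlen
      omega
  refine ⟨huplt, ?_⟩
  rintro x hpx hxq ⟨h1, h2⟩
  have h3 := len_add_three_le u hpx hxq h1 h2
  rw [← hw] at h3
  omega

theorem kImage_mul_young {n k : ℕ} {z : Equiv.Perm (Fin n)} (hz : IsYoung k z)
    (u : Equiv.Perm (Fin n)) : kImage k (u * z) = kImage k u := by
  unfold kImage
  ext y
  simp only [Finset.mem_image, Finset.mem_filter, Finset.mem_univ, true_and,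
    Equiv.Perm.mul_apply]
  constructor
  · rintro ⟨i, hi, rfl⟩
    exact ⟨z i, (hz i).mpr hi, rfl⟩
  · rintro ⟨i, hi, rfl⟩
    exact ⟨z.symm i, by rw [← hz (z.symm i), Equiv.apply_symm_apply]; exact hi,
      by rw [Equiv.apply_symm_apply]⟩

theorem isYoung_swap {n k : ℕ} {p q : Fin n} (h : p.val < k ↔ q.val < k) :
    IsYoung k (Equiv.swap p q) := by
  intro i
  rcases eq_or_ne i p with rfl | hip
  · rw [Equiv.swap_apply_left]; exact h.symm
  rcases eq_or_ne i q with rfl | hiq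
  · rw [Equiv.swap_apply_right]; exact h
  · rw [Equiv.swap_apply_of_ne_of_ne hip hiq]

/-- order preservation within blocks, for a single k-cover -/
theorem cover_preserve {n k : ℕ} {u w : Equiv.Perm (Fin n)} (h : KBruhatCover k u w) :
    ∀ c d : Fin n, c < d → ((c.val < k ∧ d.val < k) ∨ (k ≤ c.val ∧ k ≤ d.val)) →
      u c < u d → w c < w d := by
  obtain ⟨⟨⟨i, j, hij, hwij⟩, hlen⟩, hkim⟩ := h
  have main : ∀ p q : Fin n, p < q → w = u * Equiv.swap p q →
      ∀ c d : Fin n, c < d → ((c.val < k ∧ d.val < k) ∨ (k ≤ c.val ∧ k ≤ d.val)) →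
        u c < u d → w c < w d := by
    intro p q hpq hw c d hcd hblk hud
    have hone : p.val < k ∧ ¬ q.val < k := by
      by_cases hp : p.val < k <;> by_cases hq : q.val < k
      · have : kImage k w = kImage k u := by
          rw [hw]; exact kImage_mul_young (isYoung_swap (iff_of_true hp hq)) u
        exact absurd this.symm hkim
      · exact ⟨hp, hq⟩
      · have := Fin.lt_def.mp hpq; omega
      · have : kImage k w = kImage k u := by
          rw [hw]; exact kImage_mul_young (isYoung_swap (iff_of_false hp hq)) u
        exact absurd this.symm hkim
    obtain ⟨hpk, hqk⟩ := hone
    obtain ⟨hupq, hmid⟩ := cover_structure hpq hw hlen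
    have happ : ∀ x : Fin n, w x = u (Equiv.swap p q x) := by
      intro x; rw [hw]; rfl
    rcases hblk with ⟨hck, hdk⟩ | ⟨hck, hdk⟩
    · -- both < k; so c ≠ q and d ≠ q
      have hcq : c ≠ q := fun hc => hqk (hc ▸ hck)
      have hdq : d ≠ q := fun hc => hqk (hc ▸ hdk)
      rcases eq_or_ne c p with rfl | hcp
      · -- now the swap is `swap c q`
        rw [happ c, happ d, Equiv.swap_apply_left,
          Equiv.swap_apply_of_ne_of_ne (ne_of_gt hcd) hdq]
        have hdltq : d < q := by rw [Fin.lt_def]; omega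
        have h3 := hmid d hcd hdltq
        have hnd : ¬ u d < u q := fun hc => h3 ⟨hud, hc⟩
        exact lt_of_le_of_ne (le_of_not_gt hnd) (fun hc => hdq (u.injective hc.symm))
      · rcases eq_or_ne d p with rfl | hdp
        · -- swap is `swap d q`
          rw [happ c, happ d, Equiv.swap_apply_left,
            Equiv.swap_apply_of_ne_of_ne hcp hcq]
          exact hud.trans hupq
        · rw [happ c, happ d, Equiv.swap_apply_of_ne_of_ne hcp hcq,
            Equiv.swap_apply_of_ne_of_ne hdp hdq]
          exact hud
    · -- both ≥ k; so c ≠ p and d ≠ p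
      have hcp : c ≠ p := fun hc => absurd (hc ▸ hck) (not_le.mpr hpk)
      have hdp : d ≠ p := fun hc => absurd (hc ▸ hdk) (not_le.mpr hpk)
      rcases eq_or_ne c q with rfl | hcq
      · -- swap is `swap p c`
        rw [happ c, happ d, Equiv.swap_apply_right,
          Equiv.swap_apply_of_ne_of_ne hdp (ne_of_gt hcd)]
        exact hupq.trans hud
      · rcases eq_or_ne d q with rfl | hdq
        · -- swap is `swap p d`
          rw [happ c, happ d, Equiv.swap_apply_right,
            Equiv.swap_apply_of_ne_of_ne hcp hcq]
          have hpltc : p < c := by rw [Fin.lt_def]; omega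
          have h3 := hmid c hpltc hcd
          have hnc : ¬ u p < u c := fun hc => h3 ⟨hc, hud⟩
          exact lt_of_le_of_ne (le_of_not_gt hnc) (fun hc => hcp (u.injective hc))
        · rw [happ c, happ d, Equiv.swap_apply_of_ne_of_ne hcp hcq,
            Equiv.swap_apply_of_ne_of_ne hdp hdq]
          exact hud
  rcases lt_or_gt_of_ne hij with hlt | hgt
  · exact main i j hlt hwij
  · exact main j i hgt (by rw [hwij, Equiv.swap_comm])

theorem le_preserve {n k : ℕ} {u w : Equiv.Perm (Fin n)} (h : KBruhatLE k u w) :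
    ∀ c d : Fin n, c < d → ((c.val < k ∧ d.val < k) ∨ (k ≤ c.val ∧ k ≤ d.val)) →
      u c < u d → w c < w d := by
  induction h with
  | refl => exact fun _ _ _ _ h => h
  | tail _ hbc ih =>
    intro c d hcd hblk hud
    exact cover_preserve hbc c d hcd hblk (ih c d hcd hblk hud)

theorem len_mul_of_sorted {n : ℕ} {u z : Equiv.Perm (Fin n)}
    (hz : ∀ a b : Fin n, a < b → z b < z a → u (z b) < u (z a)) :
    len (u * z) = len u + len z := by
  classical
  have hS : (Finset.univ.filter fun e : Fin n × Fin n => e.1 < e.2 ∧ (u * z) e.2 < (u * z) e.1)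
      = (Finset.univ.filter fun e : Fin n × Fin n => e.1 < e.2 ∧ u (z e.2) < u (z e.1)) := by
    apply Finset.filter_congr; intro e _
    simp [Equiv.Perm.mul_apply]
  have hlen : len (u * z) =
      (Finset.univ.filter fun e : Fin n × Fin n => e.1 < e.2 ∧ u (z e.2) < u (z e.1)).card := by
    rw [len, hS]
  have hkey := Finset.card_filter_add_card_filter_not
    (s := Finset.univ.filter fun e : Fin n × Fin n => e.1 < e.2 ∧ u (z e.2) < u (z e.1))
    (p := fun e => z e.1 < z e.2)
  rw [Finset.filter_filter, Finset.filter_filter] at hkey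
  -- S1 has the same cardinality as the inversion set of u
  have hS1 : (Finset.univ.filter fun e : Fin n × Fin n =>
      (e.1 < e.2 ∧ u (z e.2) < u (z e.1)) ∧ z e.1 < z e.2).card = len u := by
    rw [len]
    apply Finset.card_bij' (fun e _ => (z e.1, z e.2)) (fun e _ => (z.symm e.1, z.symm e.2))
    · intro e he
      simp only [Finset.mem_filter, Finset.mem_univ, true_and] at he ⊢
      exact ⟨he.2, he.1.2⟩
    · intro e he
      simp only [Finset.mem_filter, Finset.mem_univ, true_and] at he ⊢
      obtain ⟨h12, hinv⟩ := he
      have hab : z.symm e.1 < z.symm e.2 := by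
        rcases lt_trichotomy (z.symm e.1) (z.symm e.2) with h | h | h
        · exact h
        · exact absurd (z.symm.injective (Fin.ext (congrArg Fin.val h))) (by
            intro hc; exact (ne_of_lt h12) (by rw [← z.apply_symm_apply e.1, ← z.apply_symm_apply e.2, hc]))
        · exfalso
          have := hz _ _ h (by rw [z.apply_symm_apply, z.apply_symm_apply]; exact h12)
          rw [z.apply_symm_apply, z.apply_symm_apply] at this
          exact absurd hinv (asymm this)
      refine ⟨⟨hab, ?_⟩, ?_⟩
      · rw [z.apply_symm_apply, z.apply_symm_apply]; exact hinv
      · rw [z.apply_symm_apply, z.apply_symm_apply]; exact h12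
    · intro e _; simp
    · intro e _; simp
  -- S2 equals the inversion set of z
  have hS2 : (Finset.univ.filter fun e : Fin n × Fin n =>
      (e.1 < e.2 ∧ u (z e.2) < u (z e.1)) ∧ ¬ z e.1 < z e.2) = 
      (Finset.univ.filter fun e : Fin n × Fin n => e.1 < e.2 ∧ z e.2 < z e.1) := by
    apply Finset.filter_congr; intro e _
    constructor
    · rintro ⟨⟨h12, -⟩, hnlt⟩
      refine ⟨h12, ?_⟩
      rcases lt_or_gt_of_ne (fun hc : z e.1 = z e.2 => (ne_of_lt h12) (z.injective hc)) with h | h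
      · exact absurd h hnlt
      · exact h
    · rintro ⟨h12, hlt⟩
      exact ⟨⟨h12, hz _ _ h12 hlt⟩, fun hc => absurd hlt (asymm hc)⟩
  rw [hS2] at hkey
  rw [hlen, ← hkey, hS1]
  rfl

/-- Lemma: if `u ≤_k w` then there is `z ∈ S_k × S_{n-k}` such that `uz` is
anti-Grassmannian, `uz ≤_k wz`, and both factorizations are length additive. -/
theorem exists_antiGrass_rep {n k : ℕ} (hk : k ≤ n) (u w : Equiv.Perm (Fin n))
    (h : KBruhatLE k u w) :
    ∃ z : Equiv.Perm (Fin n), IsYoung k z ∧ AntiGrass k (u * z) ∧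
      KBruhatLE k (u * z) (w * z) ∧
      len (u * z) = len u + len z ∧ len (w * z) = len w + len z := by
  classical
  have hfk : (Finset.univ.filter fun i : Fin n => i.val < k).card = k := by
    have hcard : (Finset.univ.filter fun i : Fin n => i.val < k).card = (Finset.range k).card := by
      apply Finset.card_nbij (i := fun i => i.val)
      · intro a ha
        simp only [Finset.mem_coe, Finset.mem_filter, Finset.mem_univ, true_and] at ha
        exact Finset.mem_range.mpr ha
      · intro a _ b _ hab
        exact Fin.ext hab
      · intro a ha
        simp only [Finset.coe_range, Set.mem_Iio] at ha
        refine ⟨⟨a, lt_of_lt_of_le ha hk⟩, ?_, rfl⟩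
        simp only [Finset.coe_filter, Finset.mem_univ, true_and, Set.mem_setOf_eq]
        exact ha
    rw [hcard, Finset.card_range]
  set A : Finset (Fin n) := kImage k u with hAdef
  have hA : A.card = k := by
    rw [hAdef, kImage, Finset.card_image_of_injective _ u.injective, hfk]
  have hAc : Aᶜ.card = n - k := by
    rw [Finset.card_compl, Fintype.card_fin, hA]
  set f : Fin n → Fin n := fun i =>
    if h : i.val < k then A.orderEmbOfFin hA ⟨k - 1 - i.val, by omega⟩
    else Aᶜ.orderEmbOfFin hAc ⟨n - 1 - i.val, by have := i.2; omega⟩ with hfdef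
  have hfA : ∀ i : Fin n, i.val < k → f i ∈ A := by
    intro i hi
    rw [hfdef]; simp only [dif_pos hi]
    exact Finset.orderEmbOfFin_mem A hA _
  have hfAc : ∀ i : Fin n, ¬ i.val < k → f i ∈ Aᶜ := by
    intro i hi
    rw [hfdef]; simp only [dif_neg hi]
    exact Finset.orderEmbOfFin_mem Aᶜ hAc _
  have hfinj : Function.Injective f := by
    intro a b hab
    by_cases ha : a.val < k <;> by_cases hb : b.val < k
    · rw [hfdef] at hab
      simp only [dif_pos ha, dif_pos hb] at hab
      have := (A.orderEmbOfFin hA).injective hab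
      have hval := congrArg Fin.val this
      simp only at hval
      exact Fin.ext (by omega)
    · exact absurd (hab ▸ hfA a ha) (Finset.mem_compl.mp (hfAc b hb) |> fun hc hd => hc hd)
    · exact absurd ((hab.symm) ▸ hfA b hb) (Finset.mem_compl.mp (hfAc a ha) |> fun hc hd => hc hd)
    · rw [hfdef] at hab
      simp only [dif_neg ha, dif_neg hb] at hab
      have := (Aᶜ.orderEmbOfFin hAc).injective hab
      have hval := congrArg Fin.val this
      simp only at hval
      have h2a := a.2
      have h2b := b.2
      exact Fin.ext (by omega)
  set v : Equiv.Perm (Fin n) := Equiv.ofBijective f (Finite.injective_iff_bijective.mp hfinj) with hvdef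
  have hv : ∀ i, v i = f i := fun i => rfl
  have hvmem : ∀ i : Fin n, v i ∈ A ↔ i.val < k := by
    intro i
    by_cases hi : i.val < k
    · exact iff_of_true (hv i ▸ hfA i hi) hi
    · exact iff_of_false (hv i ▸ Finset.mem_compl.mp (hfAc i hi)) hi
  set z : Equiv.Perm (Fin n) := u⁻¹ * v with hzdef
  have huz : u * z = v := by rw [hzdef, mul_inv_cancel_left]
  have hzapp : ∀ i, u (z i) = v i := by
    intro i; rw [← huz]; rfl
  have hYoung : IsYoung k z := by
    intro i
    have h1 : z i = u.symm (v i) := rfl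
    have huA : ∀ y : Fin n, (u.symm y).val < k ↔ y ∈ A := by
      intro y
      rw [hAdef, kImage]
      simp only [Finset.mem_image, Finset.mem_filter, Finset.mem_univ, true_and]
      constructor
      · intro hy; exact ⟨u.symm y, hy, u.apply_symm_apply y⟩
      · rintro ⟨i, hi, rfl⟩; rwa [Equiv.symm_apply_apply]
    rw [h1, huA, hvmem]
  have hAG : AntiGrass k v := by
    constructor
    · intro a b hab hbk
      have hak : a.val < k := lt_trans (Fin.lt_def.mp hab) hbk
      rw [hv a, hv b, hfdef]
      simp only [dif_pos hak, dif_pos hbk]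
      apply (A.orderEmbOfFin hA).strictMono
      rw [Fin.mk_lt_mk]
      have := Fin.lt_def.mp hab
      omega
    · intro a b hab hka
      have hkb : k ≤ b.val := le_trans hka (le_of_lt (Fin.lt_def.mp hab))
      rw [hv a, hv b, hfdef]
      simp only [dif_neg (not_lt.mpr hka), dif_neg (not_lt.mpr hkb)]
      apply (Aᶜ.orderEmbOfFin hAc).strictMono
      rw [Fin.mk_lt_mk]
      have := Fin.lt_def.mp hab
      have := b.2
      omega
  -- same-block property of z-inversions
  have hblkz : ∀ a b : Fin n, a < b → z b < z a →
      (a.val < k ∧ b.val < k) ∨ (k ≤ a.val ∧ k ≤ b.val) := by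
    intro a b hab hzz
    by_cases ha : a.val < k <;> by_cases hb : b.val < k
    · exact Or.inl ⟨ha, hb⟩
    · exfalso
      have h1 : (z a).val < k := (hYoung a).mpr ha
      have h2 : ¬ (z b).val < k := fun hc => hb ((hYoung b).mp hc)
      exact absurd (Fin.lt_def.mpr (by omega) : z a < z b) (asymm hzz)
    · exact absurd (Fin.lt_def.mp hab) (by omega)
    · exact Or.inr ⟨le_of_not_gt ha, le_of_not_gt hb⟩
  have hzu : ∀ a b : Fin n, a < b → z b < z a → u (z b) < u (z a) := by
    intro a b hab hzz
    rw [hzapp a, hzapp b]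
    rcases hblkz a b hab hzz with ⟨ha, hb⟩ | ⟨ha, hb⟩
    · exact hAG.1 a b hab hb
    · exact hAG.2 a b hab ha
  have hlenadd : ∀ x : Equiv.Perm (Fin n), KBruhatLE k u x → len (x * z) = len x + len z := by
    intro x hx
    apply len_mul_of_sorted
    intro a b hab hzz
    have h1 : u (z b) < u (z a) := hzu a b hab hzz
    have hblk2 : ((z b).val < k ∧ (z a).val < k) ∨ (k ≤ (z b).val ∧ k ≤ (z a).val) := by
      rcases hblkz a b hab hzz with ⟨ha, hb⟩ | ⟨ha, hb⟩
      · exact Or.inl ⟨(hYoung b).mpr hb, (hYoung a).mpr ha⟩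
      · refine Or.inr ⟨le_of_not_gt (fun hc => ?_), le_of_not_gt (fun hc => ?_)⟩
        · exact absurd ((hYoung b).mp hc) (not_lt.mpr hb)
        · exact absurd ((hYoung a).mp hc) (not_lt.mpr ha)
    exact le_preserve hx (z b) (z a) hzz hblk2 h1
  have hchain : ∀ x : Equiv.Perm (Fin n), KBruhatLE k u x → KBruhatLE k (u * z) (x * z) := by
    intro x hx
    have hx' : Relation.ReflTransGen (KBruhatCover k) u x := hx
    induction hx' with
    | refl => exact Relation.ReflTransGen.refl
    | @tail b c hub hbc ih =>
      refine Relation.ReflTransGen.tail (ih hub) ?_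
      have hub2 : KBruhatLE k u c := Relation.ReflTransGen.tail hub hbc
      obtain ⟨⟨⟨i, j, hij, hbw⟩, hlen1⟩, hkim⟩ := hbc
      refine ⟨⟨⟨z.symm i, z.symm j, fun hc => hij (z.symm.injective hc), ?_⟩, ?_⟩, ?_⟩
      · have hswap : Equiv.swap (z.symm i) (z.symm j) = z⁻¹ * Equiv.swap i j * z := by
          have := Equiv.swap_apply_apply z⁻¹ i j
          simpa using this
        rw [hswap, hbw]
        group
      · rw [hlenadd b hub, hlenadd c hub2, hlen1]
        ring
      · have e1 : kImage k (b * z) = kImage k b := kImage_mul_young hYoung b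
        have e2 : kImage k (c * z) = kImage k c := kImage_mul_young hYoung c
        rw [e1, e2]
        exact hkim
  refine ⟨z, hYoung, huz ▸ hAG, hchain w h, hlenadd u Relation.ReflTransGen.refl, hlenadd w h⟩
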